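/- Let q ∈ L¹([a,b]) (complex valued), let Γ be a subset of the unit circle in ℂ, and let k₁, k₂ ∈ ℂ with k₁ ≠ 0 be such that Re(i·w·(k₁x + k₂)) ≤ 0 for all x ∈ [a,b] and all w ∈ Γ. Then sup_{w∈Γ} |∫_a^b q(x)·e^{iRw(k₁x + k₂)} dx| → 0 as R → +∞. -/

import Mathlib

open Complex Filter
open scoped Convolution

open MeasureTheory intervalIntegral in
private lemma ibp_bound {a b : ℝ} (hab : a ≤ b) (h : ℝ → ℂ) (hsm : ContDiff ℝ 1 h)
    (c d : ℂ) (hc : c ≠ 0)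
    (hexp : ∀ x ∈ Set.Icc a b, ‖Complex.exp (c * x + d)‖ ≤ 1)
    {C D : ℝ} (hC : ∀ x ∈ Set.Icc a b, ‖h x‖ ≤ C) (hD : ∀ x ∈ Set.Icc a b, ‖deriv h x‖ ≤ D) :
    ‖∫ x in a..b, h x * Complex.exp (c * x + d)‖ ≤ (2 * C + D * (b - a)) / ‖c‖ := by
  have hcpos : (0:ℝ) < ‖c‖ := norm_pos_iff.mpr hc
  set v : ℝ → ℂ := fun x => Complex.exp (c * x + d) / c with hv
  have hval : ∀ x : ℝ, HasDerivAt v (Complex.exp (c * x + d)) x := by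
    intro x
    have h1 : HasDerivAt (fun x : ℝ => c * (x : ℂ) + d) c x := by
      simpa using ((Complex.ofRealCLM.hasDerivAt (x := x)).const_mul c).add_const d
    have h3 := h1.cexp.div_const c
    simpa [hv, mul_div_cancel_right₀ _ hc] using h3
  have hu : ∀ x ∈ Set.uIcc a b, HasDerivAt h (deriv h x) x := fun x _ =>
    ((hsm.differentiable one_ne_zero) x).hasDerivAt
  have hu' : IntervalIntegrable (deriv h) MeasureTheory.volume a b :=
    (hsm.continuous_deriv le_rfl).intervalIntegrable a b
  have hecont : Continuous fun x : ℝ => Complex.exp (c * x + d) := by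
    fun_prop
  have hv' : IntervalIntegrable (fun x : ℝ => Complex.exp (c * x + d))
      MeasureTheory.volume a b := hecont.intervalIntegrable a b
  rw [integral_mul_deriv_eq_deriv_mul hu (fun x _ => hval x) hu' hv']
  have hvb : ∀ x ∈ Set.Icc a b, ‖v x‖ ≤ 1 / ‖c‖ := by
    intro x hx
    rw [hv]
    simp only [norm_div]
    gcongr
    exact hexp x hx
  have hC0 : 0 ≤ C := le_trans (norm_nonneg _) (hC a ⟨le_rfl, hab⟩)
  have hD0 : 0 ≤ D := le_trans (norm_nonneg _) (hD a ⟨le_rfl, hab⟩)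
  have hbd : ‖∫ x in a..b, deriv h x * v x‖ ≤ D * (1 / ‖c‖) * |b - a| := by
    apply intervalIntegral.norm_integral_le_of_norm_le_const
    intro x hx
    have hx' : x ∈ Set.Icc a b := by
      rw [Set.uIoc_of_le hab] at hx
      exact ⟨hx.1.le, hx.2⟩
    rw [norm_mul]
    exact mul_le_mul (hD x hx') (hvb x hx') (norm_nonneg _) hD0
  have h1 : ‖h b * v b‖ ≤ C * (1 / ‖c‖) := by
    rw [norm_mul]
    exact mul_le_mul (hC b ⟨hab, le_rfl⟩) (hvb b ⟨hab, le_rfl⟩) (norm_nonneg _) hC0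
  have h2 : ‖h a * v a‖ ≤ C * (1 / ‖c‖) := by
    rw [norm_mul]
    exact mul_le_mul (hC a ⟨le_rfl, hab⟩) (hvb a ⟨le_rfl, hab⟩) (norm_nonneg _) hC0
  have habs : |b - a| = b - a := abs_of_nonneg (by linarith)
  calc ‖h b * v b - h a * v a - ∫ x in a..b, deriv h x * v x‖
      ≤ ‖h b * v b - h a * v a‖ + ‖∫ x in a..b, deriv h x * v x‖ := norm_sub_le _ _
    _ ≤ (‖h b * v b‖ + ‖h a * v a‖) + ‖∫ x in a..b, deriv h x * v x‖ := by
        gcongr; exact norm_sub_le _ _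
    _ ≤ (C * (1 / ‖c‖) + C * (1 / ‖c‖)) + D * (1 / ‖c‖) * |b - a| := by gcongr
    _ = (2 * C + D * (b - a)) / ‖c‖ := by rw [habs]; field_simp; ring

theorem uniform_riemann_lebesgue (a b : ℝ) (hab : a < b)
    (q : ℝ → ℂ) (hq : MeasureTheory.IntegrableOn q (Set.Icc a b))
    (Γ : Set ℂ) (hΓ : ∀ w ∈ Γ, ‖w‖ = 1)
    (k₁ k₂ : ℂ) (hk₁ : k₁ ≠ 0)
    (hre : ∀ x ∈ Set.Icc a b, ∀ w ∈ Γ, (Complex.I * w * (k₁ * x + k₂)).re ≤ 0) :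
    ∀ ε > 0, ∃ R₀ : ℝ, ∀ R ≥ R₀, ∀ w ∈ Γ,
      ‖∫ x in a..b, q x * Complex.exp (Complex.I * R * w * (k₁ * x + k₂))‖ < ε := by
  classical
  intro ε hε
  have hba : (0:ℝ) < b - a := by linarith
  set q' : ℝ → ℂ := (Set.Icc a b).indicator q with hq'def
  have hq' : MeasureTheory.Integrable q' := hq.integrable_indicator measurableSet_Icc
  obtain ⟨g, hgsupp, hgint, hgcont, hgI⟩ :=
    hq'.exists_hasCompactSupport_integral_sub_le (show (0:ℝ) < ε / 4 by positivity)
  set ε' : ℝ := ε / (4 * (b - a)) with hε'def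
  have hε'pos : 0 < ε' := by positivity
  have hKuc : UniformContinuousOn g (Set.Icc (a - 1) (b + 1)) :=
    isCompact_Icc.uniformContinuousOn_of_continuous hgcont.continuousOn
  rw [Metric.uniformContinuousOn_iff] at hKuc
  obtain ⟨δ, hδpos, hδ⟩ := hKuc ε' hε'pos
  set δ' : ℝ := min δ 1 with hδ'def
  have hδ'pos : 0 < δ' := lt_min hδpos one_pos
  set φ : ContDiffBump (0:ℝ) := ⟨δ'/2, δ', by positivity, by linarith⟩ with hφdef
  set h : ℝ → ℂ := (φ.normed MeasureTheory.volume)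
      ⋆[ContinuousLinearMap.lsmul ℝ ℝ, MeasureTheory.volume] g with hhdef
  have hsm : ContDiff ℝ 1 h :=
    φ.hasCompactSupport_normed.contDiff_convolution_left _ φ.contDiff_normed
      (hgcont.locallyIntegrable)
  have hclose : ∀ x ∈ Set.Icc a b, dist (h x) (g x) ≤ ε' := by
    intro x hx
    apply ContDiffBump.dist_normed_convolution_le hgcont.aestronglyMeasurable
    intro y hy
    have hyx : |y - x| < δ' := by simpa [Real.dist_eq] using hy
    have hy1 : y ∈ Set.Icc (a - 1) (b + 1) := by
      have h1 : δ' ≤ 1 := min_le_right _ _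
      have := abs_lt.mp hyx
      constructor <;> [linarith [hx.1]; linarith [hx.2]]
    have hx1 : x ∈ Set.Icc (a - 1) (b + 1) := ⟨by linarith [hx.1], by linarith [hx.2]⟩
    exact (hδ y hy1 x hx1 (by simpa [Real.dist_eq] using hyx.trans_le (min_le_left _ _))).le
  obtain ⟨C, hC⟩ := isCompact_Icc.exists_bound_of_continuousOn
    (hsm.continuous.continuousOn : ContinuousOn h (Set.Icc a b))
  obtain ⟨D, hD⟩ := isCompact_Icc.exists_bound_of_continuousOn
    ((hsm.continuous_deriv le_rfl).continuousOn : ContinuousOn (deriv h) (Set.Icc a b))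
  have hC0 : 0 ≤ C := le_trans (norm_nonneg _) (hC a ⟨le_rfl, hab.le⟩)
  have hD0 : 0 ≤ D := le_trans (norm_nonneg _) (hD a ⟨le_rfl, hab.le⟩)
  set B : ℝ := 2 * C + D * (b - a) with hBdef
  have hB0 : 0 ≤ B := by positivity
  have hk₁pos : 0 < ‖k₁‖ := norm_pos_iff.mpr hk₁
  refine ⟨max 1 (2 * B / (‖k₁‖ * ε) + 1), fun R hR w hw => ?_⟩
  have hR1 : (1:ℝ) ≤ R := le_trans (le_max_left _ _) hR
  have hRpos : (0:ℝ) < R := by linarith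
  have hRB : 2 * B / (‖k₁‖ * ε) + 1 ≤ R := le_trans (le_max_right _ _) hR
  have hw0 : w ≠ 0 := by
    intro hcon
    have h1 := hΓ w hw
    rw [hcon, norm_zero] at h1
    exact zero_ne_one h1
  set c : ℂ := Complex.I * (R:ℂ) * w * k₁ with hcdef
  set d : ℂ := Complex.I * (R:ℂ) * w * k₂ with hddef
  have hc0 : c ≠ 0 := by
    apply mul_ne_zero (mul_ne_zero (mul_ne_zero Complex.I_ne_zero ?_) hw0) hk₁
    exact_mod_cast hRpos.ne'
  have hcnorm : ‖c‖ = R * ‖k₁‖ := by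
    simp only [hcdef, norm_mul, Complex.norm_I, Complex.norm_real, Real.norm_eq_abs,
      hΓ w hw, one_mul, mul_one, abs_of_pos hRpos]
  have hEq : ∀ x : ℝ, Complex.I * (R:ℂ) * w * (k₁ * x + k₂) = c * x + d := fun x => by
    rw [hcdef, hddef]; ring
  have hexp : ∀ x ∈ Set.Icc a b, ‖Complex.exp (c * x + d)‖ ≤ 1 := by
    intro x hx
    rw [← hEq x, Complex.norm_exp, Real.exp_le_one_iff]
    have hrw : Complex.I * (R:ℂ) * w * (k₁ * x + k₂)
        = (R:ℝ) * (Complex.I * w * (k₁ * x + k₂)) := by push_cast; ring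
    rw [hrw, Complex.re_ofReal_mul]
    have := hre x hx w hw
    nlinarith
  have hecont : Continuous fun x : ℝ => Complex.exp (c * x + d) := by fun_prop
  have hqiv : IntervalIntegrable q MeasureTheory.volume a b :=
    (intervalIntegrable_iff_integrableOn_Ioc_of_le hab.le).mpr
      (hq.mono_set Set.Ioc_subset_Icc_self)
  have hqe : IntervalIntegrable (fun x => q x * Complex.exp (c * x + d))
      MeasureTheory.volume a b := hqiv.mul_continuousOn hecont.continuousOn
  have hhe : IntervalIntegrable (fun x => h x * Complex.exp (c * x + d))
      MeasureTheory.volume a b := (hsm.continuous.mul hecont).intervalIntegrable a b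
  have hqhe : IntervalIntegrable (fun x => (q x - h x) * Complex.exp (c * x + d))
      MeasureTheory.volume a b :=
    (hqiv.sub (hsm.continuous.intervalIntegrable a b)).mul_continuousOn hecont.continuousOn
  -- L¹ estimate
  have hLone : ∫ x in a..b, ‖q x - h x‖ ≤ ε / 2 := by
    have step1 : ∀ x ∈ Set.Icc a b, ‖q x - h x‖ ≤ ‖q' x - g x‖ + ε' := by
      intro x hx
      have hxq : q' x = q x := Set.indicator_of_mem hx q
      calc ‖q x - h x‖ = ‖(q' x - g x) + (g x - h x)‖ := by rw [hxq]; ring_nf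
        _ ≤ ‖q' x - g x‖ + ‖g x - h x‖ := norm_add_le _ _
        _ ≤ ‖q' x - g x‖ + ε' := by
            have := hclose x hx
            rw [dist_eq_norm, norm_sub_rev] at this
            linarith
    have int1 : IntervalIntegrable (fun x => ‖q x - h x‖) MeasureTheory.volume a b :=
      (hqiv.sub (hsm.continuous.intervalIntegrable a b)).norm
    have intqg : MeasureTheory.Integrable (fun x => ‖q' x - g x‖) :=
      (hq'.sub hgI).norm
    have int2 : IntervalIntegrable (fun x => ‖q' x - g x‖ + ε') MeasureTheory.volume a b :=
      intqg.intervalIntegrable.add (intervalIntegrable_const)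
    have hmono := intervalIntegral.integral_mono_on hab.le int1 int2 step1
    have hsplit : ∫ x in a..b, (‖q' x - g x‖ + ε')
        = (∫ x in a..b, ‖q' x - g x‖) + ε' * (b - a) := by
      rw [intervalIntegral.integral_add intqg.intervalIntegrable intervalIntegrable_const,
        intervalIntegral.integral_const, smul_eq_mul]
      ring
    have hsub : ∫ x in a..b, ‖q' x - g x‖ ≤ ε / 4 := by
      rw [intervalIntegral.integral_of_le hab.le]
      refine le_trans (MeasureTheory.setIntegral_le_integral intqg
        (Filter.Eventually.of_forall fun x => norm_nonneg _)) hgint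
    have hε'ba : ε' * (b - a) = ε / 4 := by
      rw [hε'def]; field_simp
    calc ∫ x in a..b, ‖q x - h x‖ ≤ _ := hmono
      _ = (∫ x in a..b, ‖q' x - g x‖) + ε' * (b - a) := hsplit
      _ ≤ ε / 4 + ε / 4 := by rw [hε'ba]; linarith
      _ = ε / 2 := by ring
  -- split the integral
  have hsplit : (∫ x in a..b, q x * Complex.exp (Complex.I * R * w * (k₁ * x + k₂)))
      = (∫ x in a..b, (q x - h x) * Complex.exp (c * x + d))
        + ∫ x in a..b, h x * Complex.exp (c * x + d) := by
    rw [← intervalIntegral.integral_add hqhe hhe]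
    apply intervalIntegral.integral_congr
    intro x _
    simp only [hEq x]
    ring
  rw [hsplit]
  have hpiece1 : ‖∫ x in a..b, (q x - h x) * Complex.exp (c * x + d)‖ ≤ ε / 2 := by
    refine le_trans (intervalIntegral.norm_integral_le_integral_norm hab.le) ?_
    refine le_trans ?_ hLone
    refine intervalIntegral.integral_mono_on hab.le hqhe.norm
      (hqiv.sub (hsm.continuous.intervalIntegrable a b)).norm ?_
    intro x hx
    rw [norm_mul]
    calc ‖q x - h x‖ * ‖Complex.exp (c * x + d)‖ ≤ ‖q x - h x‖ * 1 :=
          mul_le_mul_of_nonneg_left (hexp x hx) (norm_nonneg _)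
      _ = ‖q x - h x‖ := mul_one _
  have hpiece2 : ‖∫ x in a..b, h x * Complex.exp (c * x + d)‖ ≤ B / (R * ‖k₁‖) := by
    rw [← hcnorm]
    exact ibp_bound hab.le h hsm c d hc0 hexp hC hD
  have hkey : B / (R * ‖k₁‖) < ε / 2 := by
    rw [div_lt_iff₀ (by positivity)]
    have h2B : 2 * B ≤ (R - 1) * (‖k₁‖ * ε) := by
      rw [div_add' _ _ _ (by positivity : ‖k₁‖ * ε ≠ 0)] at hRB
      have := (div_le_iff₀ (by positivity : (0:ℝ) < ‖k₁‖ * ε)).mp hRB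
      nlinarith
    nlinarith [mul_pos hk₁pos hε]
  calc ‖(∫ x in a..b, (q x - h x) * Complex.exp (c * x + d))
        + ∫ x in a..b, h x * Complex.exp (c * x + d)‖
      ≤ ‖∫ x in a..b, (q x - h x) * Complex.exp (c * x + d)‖
        + ‖∫ x in a..b, h x * Complex.exp (c * x + d)‖ := norm_add_le _ _
    _ ≤ ε / 2 + B / (R * ‖k₁‖) := add_le_add hpiece1 hpiece2
    _ < ε / 2 + ε / 2 := by linarith
    _ = ε := by ring
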